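/- For the planar system dy/dt = βy + y(Γ₁y² + Γ₂z²), dz/dt = βz + z(Γ₃y² + Γ₁z²) with β > 0, Γ₁ < 0, Γ₂Γ₃ > Γ₁², Γ₁ > Γ₂, and Γ₁ > Γ₃, the Jacobian at the axis equilibrium (√(−β/Γ₁), 0) is the diagonal matrix diag(−2β, β(1 − Γ₃/Γ₁)), both of whose entries are negative; hence (√(−β/Γ₁), 0) is a hyperbolic asymptotically stable equilibrium. -/

import Mathlib

set_option maxHeartbeats 1000000

open Filter Topology Set

section Aux

lemma barrier' {g g' : ℝ → ℝ} {B : ℝ}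
    (hg : ∀ t, HasDerivAt g (g' t) t) (h0 : g 0 < B)
    (hB : ∀ t ≥ 0, g t = B → g' t < 0) : ∀ t ≥ 0, g t < B := by
  by_contra h
  push_neg at h
  obtain ⟨t₁, ht₁, hgt₁⟩ := h
  have hcont : Continuous g := by
    have : Differentiable ℝ g := fun t => (hg t).differentiableAt
    exact this.continuous
  set S : Set ℝ := {t | 0 ≤ t ∧ B ≤ g t} with hS
  have hSne : S.Nonempty := ⟨t₁, ht₁, hgt₁⟩
  have hSbdd : BddBelow S := ⟨0, fun t ht => ht.1⟩
  have hSclosed : IsClosed S :=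
    (isClosed_le continuous_const continuous_id).inter (isClosed_le continuous_const hcont)
  set T := sInf S with hT
  have hTS : T ∈ S := hSclosed.csInf_mem hSne hSbdd
  have hT0 : 0 ≤ T := hTS.1
  have hTpos : 0 < T := by
    rcases eq_or_lt_of_le hT0 with h | h
    · exact absurd hTS.2 (by rw [← h]; exact not_le.mpr h0)
    · exact h
  have hbefore : ∀ t, 0 ≤ t → t < T → g t < B := by
    intro t h0t htT
    by_contra hc
    push_neg at hc
    exact absurd (csInf_le hSbdd ⟨h0t, hc⟩) (not_le.mpr htT)
  have hgTB : g T = B := by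
    refine le_antisymm ?_ hTS.2
    have := (hcont.tendsto T).mono_left (nhdsWithin_le_nhds (s := Iio T))
    refine le_of_tendsto this ?_
    filter_upwards [Ioo_mem_nhdsLT_of_mem ⟨hTpos, le_refl T⟩] with t ht
    exact le_of_lt (hbefore t (le_of_lt ht.1) ht.2)
  have hslope : Tendsto (slope g T) (𝓝[<] T) (𝓝 (g' T)) :=
    ((hasDerivAt_iff_tendsto_slope.mp (hg T)).mono_left
      (nhdsWithin_mono T (fun x hx => ne_of_lt hx)))
  have hge : 0 ≤ g' T := by
    refine ge_of_tendsto hslope ?_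
    filter_upwards [Ioo_mem_nhdsLT_of_mem ⟨hTpos, le_refl T⟩] with t ht
    have h1 : g t - g T < 0 := by
      have := hbefore t (le_of_lt ht.1) ht.2; rw [hgTB]; linarith [hgTB ▸ this]
    have h2 : t - T < 0 := by linarith [ht.2]
    have : 0 ≤ (g t - g T) / (t - T) := le_of_lt (div_pos_of_neg_of_neg h1 h2)
    simpa [slope_def_field, div_eq_div_iff] using this
  exact absurd (hB T hT0 hgTB) (not_lt.mpr hge)

lemma decay' {g g' : ℝ → ℝ} {c : ℝ}
    (hg : ∀ t, HasDerivAt g (g' t) t)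
    (hle : ∀ t ≥ 0, g' t ≤ -c * g t) :
    ∀ t ≥ 0, g t ≤ g 0 * Real.exp (-c * t) := by
  intro t ht
  set h : ℝ → ℝ := fun t => g t * Real.exp (c * t) with hh
  have hder : ∀ u, HasDerivAt h ((g' u + c * g u) * Real.exp (c * u)) u := by
    intro u
    have e1 : HasDerivAt (fun t : ℝ => Real.exp (c * t)) (c * Real.exp (c * u)) u := by
      simpa [mul_comm] using (((hasDerivAt_id u).const_mul c).exp)
    have := (hg u).mul e1
    refine this.congr_deriv ?_
    ring
  have hanti : AntitoneOn h (Ici (0:ℝ)) := by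
    refine antitoneOn_of_deriv_nonpos (convex_Ici 0) ?_ ?_ ?_
    · exact (Continuous.continuousOn (by
        have : Differentiable ℝ h := fun u => (hder u).differentiableAt
        exact this.continuous))
    · intro u hu
      exact ((hder u).differentiableAt).differentiableWithinAt
    · intro u hu
      rw [interior_Ici] at hu
      rw [(hder u).deriv]
      have := hle u (le_of_lt hu)
      have hexp : (0:ℝ) < Real.exp (c * u) := Real.exp_pos _
      nlinarith
  have := hanti (self_mem_Ici) (mem_Ici.mpr ht) ht
  simp only [hh] at this
  have hexp : (0:ℝ) < Real.exp (c * t) := Real.exp_pos _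
  have h2 : g t ≤ g 0 / Real.exp (c * t) := by
    rw [le_div_iff₀ hexp]
    simpa using this
  calc g t ≤ g 0 / Real.exp (c * t) := h2
    _ = g 0 * Real.exp (-c * t) := by
        rw [neg_mul, Real.exp_neg, div_eq_mul_inv]

lemma key' (β Γ₁ Γ₂ Γ₃ s : ℝ) (hβ : 0 < β) (h1 : Γ₁ < 0) (h2 : Γ₂ < 0) (h3 : Γ₃ < 0)
    (h13 : Γ₃ < Γ₁) (hs : 0 < s) (hs2 : Γ₁ * s ^ 2 = -β) :
    ∃ r > 0, ∃ c > 0, ∀ e w : ℝ, e ^ 2 + w ^ 2 ≤ r ^ 2 →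
      2 * e * (β * (s + e) + (s + e) * (Γ₁ * (s + e) ^ 2 + Γ₂ * w ^ 2))
      + 2 * w * (β * w + w * (Γ₃ * (s + e) ^ 2 + Γ₁ * w ^ 2))
      ≤ -c * (e ^ 2 + w ^ 2) := by
  have hden : 0 < -3 * Γ₂ - 5 * Γ₃ := by linarith
  set r : ℝ := min (s / 2) ((Γ₁ - Γ₃) * s / (-3 * Γ₂ - 5 * Γ₃)) with hrdef
  set c : ℝ := min (3 / 2 * β) ((Γ₁ - Γ₃) * s ^ 2) with hcdef
  have hrpos : 0 < r := lt_min (by linarith) (div_pos (by nlinarith) hden)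
  have hcpos : 0 < c := lt_min (by linarith) (by nlinarith)
  refine ⟨r, hrpos, c, hcpos, ?_⟩
  intro e w hew
  have hrs : r ≤ s / 2 := min_le_left _ _
  have hrD : r ≤ (Γ₁ - Γ₃) * s / (-3 * Γ₂ - 5 * Γ₃) := min_le_right _ _
  have he2 : e ^ 2 ≤ r ^ 2 := by nlinarith [sq_nonneg w]
  have hw2 : w ^ 2 ≤ r ^ 2 := by nlinarith [sq_nonneg e]
  have heub : e ≤ r := by nlinarith [sq_nonneg (e - r)]
  have helb : -r ≤ e := by nlinarith [sq_nonneg (e + r)]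
  have hes : -s / 2 ≤ e := by linarith
  have hes2 : e ≤ s / 2 := by linarith
  have hP : (s + e) * (e + 2 * s) ≥ 3 * s ^ 2 / 4 := by nlinarith
  have hA1 : 2 * Γ₁ * e ^ 2 * ((s + e) * (e + 2 * s)) ≤ -(3 / 2) * β * e ^ 2 := by
    have hnn : 2 * Γ₁ * e ^ 2 ≤ 0 := by nlinarith [sq_nonneg e]
    have := mul_le_mul_of_nonpos_left hP hnn
    have heq : 2 * Γ₁ * e ^ 2 * (3 * s ^ 2 / 4) = -(3 / 2) * β * e ^ 2 := by
      linear_combination (3 / 2 * e ^ 2) * hs2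
    linarith
  have hA2 : 2 * Γ₂ * (e * (s + e)) * w ^ 2 ≤ -3 * Γ₂ * s * r * w ^ 2 := by
    have h0 : e * (s + e) ≥ -(r * (3 * s / 2)) := by nlinarith
    have h1' : 2 * Γ₂ * (e * (s + e)) ≤ -3 * Γ₂ * s * r := by nlinarith
    exact mul_le_mul_of_nonneg_right h1' (sq_nonneg w)
  have hB1 : 2 * Γ₃ * (e * (e + 2 * s)) * w ^ 2 ≤ -5 * Γ₃ * s * r * w ^ 2 := by
    have h0 : e * (e + 2 * s) ≥ -(r * (5 * s / 2)) := by nlinarith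
    have h1' : 2 * Γ₃ * (e * (e + 2 * s)) ≤ -5 * Γ₃ * s * r := by nlinarith
    exact mul_le_mul_of_nonneg_right h1' (sq_nonneg w)
  have hB2 : 2 * Γ₁ * w ^ 4 ≤ 0 := by nlinarith [sq_nonneg (w ^ 2)]
  have hcross : (-3 * Γ₂ - 5 * Γ₃) * s * r ≤ (Γ₁ - Γ₃) * s ^ 2 := by
    rw [div_eq_inv_mul] at hrD
    have h4 := mul_le_mul_of_nonneg_left hrD (le_of_lt hden)
    rw [← mul_assoc, mul_inv_cancel₀ (ne_of_gt hden), one_mul] at h4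
    have h5 := mul_le_mul_of_nonneg_left h4 (le_of_lt hs)
    nlinarith
  have hcrossw : (-3 * Γ₂ - 5 * Γ₃) * s * r * w ^ 2 ≤ (Γ₁ - Γ₃) * s ^ 2 * w ^ 2 :=
    mul_le_mul_of_nonneg_right hcross (sq_nonneg w)
  have hid : 2 * e * (β * (s + e) + (s + e) * (Γ₁ * (s + e) ^ 2 + Γ₂ * w ^ 2))
      + 2 * w * (β * w + w * (Γ₃ * (s + e) ^ 2 + Γ₁ * w ^ 2))
      = 2 * Γ₁ * e ^ 2 * ((s + e) * (e + 2 * s)) + 2 * Γ₂ * (e * (s + e)) * w ^ 2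
        + 2 * Γ₃ * (e * (e + 2 * s)) * w ^ 2 + 2 * (Γ₃ - Γ₁) * s ^ 2 * w ^ 2
        + 2 * Γ₁ * w ^ 4 := by
    linear_combination (2 * e * (s + e) + 2 * w ^ 2) * hs2
  have hc1 : c ≤ 3 / 2 * β := min_le_left _ _
  have hc2 : c ≤ (Γ₁ - Γ₃) * s ^ 2 := min_le_right _ _
  have hce : c * e ^ 2 ≤ 3 / 2 * β * e ^ 2 := mul_le_mul_of_nonneg_right hc1 (sq_nonneg e)
  have hcw : c * w ^ 2 ≤ (Γ₁ - Γ₃) * s ^ 2 * w ^ 2 := mul_le_mul_of_nonneg_right hc2 (sq_nonneg w)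
  rw [hid]
  linarith

lemma norm_sq_prod (q : ℝ × ℝ) : ‖q‖ ^ 2 ≤ q.1 ^ 2 + q.2 ^ 2 ∧
    q.1 ^ 2 + q.2 ^ 2 ≤ 2 * ‖q‖ ^ 2 := by
  have h : ‖q‖ = max |q.1| |q.2| := by
    simp [Prod.norm_def, Real.norm_eq_abs]
  rcases le_total |q.1| |q.2| with h' | h' <;>
    rw [h] <;>
    [rw [max_eq_right h']; rw [max_eq_left h']] <;>
    constructor <;>
    nlinarith [sq_abs q.1, sq_abs q.2, abs_nonneg q.1, abs_nonneg q.2]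

end Aux


/-- Jacobian of the planar vector field
`F(y,z) = (βy + Γ₁y³ + Γ₂yz², βz + Γ₃y²z + Γ₁z³)`. -/
def Jac (β Γ₁ Γ₂ Γ₃ y z : ℝ) : Matrix (Fin 2) (Fin 2) ℝ :=
  !![β + 3 * Γ₁ * y ^ 2 + Γ₂ * z ^ 2, 2 * Γ₂ * y * z;
     2 * Γ₃ * y * z, β + Γ₃ * y ^ 2 + 3 * Γ₁ * z ^ 2]

/-- Lyapunov stability for the planar ODE `p' = F(p)`. -/
def IsStable2D (F : ℝ × ℝ → ℝ × ℝ) (p₀ : ℝ × ℝ) : Prop :=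
  ∀ ε > 0, ∃ d > 0, ∀ p : ℝ → ℝ × ℝ, (∀ t, HasDerivAt p (F (p t)) t) →
    ‖p 0 - p₀‖ < d → ∀ t ≥ 0, ‖p t - p₀‖ < ε

/-- Asymptotic stability for the planar ODE `p' = F(p)`. -/
def IsAsympStable2D (F : ℝ × ℝ → ℝ × ℝ) (p₀ : ℝ × ℝ) : Prop :=
  IsStable2D F p₀ ∧ ∃ d > 0, ∀ p : ℝ → ℝ × ℝ, (∀ t, HasDerivAt p (F (p t)) t) →
    ‖p 0 - p₀‖ < d → Filter.Tendsto p Filter.atTop (nhds p₀)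

/-- Under `β > 0`, `Γ₁ < 0`, `Γ₂Γ₃ > Γ₁²`, `Γ₁ > Γ₂`, `Γ₁ > Γ₃`, the Jacobian at the
axis equilibrium `(√(−β/Γ₁), 0)` is `diag(−2β, β(1 − Γ₃/Γ₁))`, both entries negative;
hence this equilibrium is asymptotically stable. -/
theorem stmt10 (β Γ₁ Γ₂ Γ₃ : ℝ) (hβ : 0 < β) (h1 : Γ₁ < 0)
    (h23 : Γ₁ ^ 2 < Γ₂ * Γ₃) (h12 : Γ₂ < Γ₁) (h13 : Γ₃ < Γ₁) :
    let s : ℝ := Real.sqrt (-(β / Γ₁))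
    let F : ℝ × ℝ → ℝ × ℝ := fun p =>
      (β * p.1 + p.1 * (Γ₁ * p.1 ^ 2 + Γ₂ * p.2 ^ 2),
       β * p.2 + p.2 * (Γ₃ * p.1 ^ 2 + Γ₁ * p.2 ^ 2))
    Jac β Γ₁ Γ₂ Γ₃ s 0 = !![-(2 * β), 0; 0, β * (1 - Γ₃ / Γ₁)] ∧
    -(2 * β) < 0 ∧ β * (1 - Γ₃ / Γ₁) < 0 ∧
    IsAsympStable2D F (s, 0) := by
  
  intro s F
  have h1' : Γ₁ ≠ 0 := ne_of_lt h1
  have hq : 0 < -(β / Γ₁) := by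
    have : β / Γ₁ < 0 := div_neg_of_pos_of_neg hβ h1
    linarith
  have hspos : 0 < s := Real.sqrt_pos.mpr hq
  have hs2 : s ^ 2 = -(β / Γ₁) := Real.sq_sqrt (le_of_lt hq)
  have hs2' : Γ₁ * s ^ 2 = -β := by
    rw [hs2]; field_simp
  have h2 : Γ₂ < 0 := lt_trans h12 h1
  have h3 : Γ₃ < 0 := lt_trans h13 h1
  refine ⟨?_, by linarith, ?_, ?_⟩
  · -- Jacobian computation
    have e1 : β + 3 * Γ₁ * s ^ 2 = -(2 * β) := by linarith [hs2']
    have e2 : β + Γ₃ * s ^ 2 = β * (1 - Γ₃ / Γ₁) := by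
      rw [hs2]
      field_simp
      ring
    unfold Jac
    ext i j
    fin_cases i <;> fin_cases j <;>
      simp [e1, e2]
  · -- second entry negative
    have : 1 - Γ₃ / Γ₁ < 0 := by
      have : Γ₃ / Γ₁ > 1 := by
        rw [gt_iff_lt, lt_div_iff_of_neg h1]
        linarith
      linarith
    nlinarith
  · -- asymptotic stability
    obtain ⟨r, hr, c, hc, hkey⟩ := key' β Γ₁ Γ₂ Γ₃ s hβ h1 h2 h3 h13 hspos hs2'
    -- general facts about any solution p
    have main : ∀ p : ℝ → ℝ × ℝ, (∀ t, HasDerivAt p (F (p t)) t) →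
        ∃ g g' : ℝ → ℝ,
          (∀ t, g t = ((p t).1 - s) ^ 2 + ((p t).2) ^ 2) ∧
          (∀ t, HasDerivAt g (g' t) t) ∧
          (∀ t, g t ≤ r ^ 2 → g' t ≤ -c * g t) := by
      intro p hp
      set y : ℝ → ℝ := fun t => (p t).1 with hy
      set z : ℝ → ℝ := fun t => (p t).2 with hz
      have hy' : ∀ t, HasDerivAt y (β * y t + y t * (Γ₁ * (y t) ^ 2 + Γ₂ * (z t) ^ 2)) t :=
        fun t => (hp t).fst
      have hz' : ∀ t, HasDerivAt z (β * z t + z t * (Γ₃ * (y t) ^ 2 + Γ₁ * (z t) ^ 2)) t :=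
        fun t => (hp t).snd
      refine ⟨fun t => (y t - s) ^ 2 + (z t) ^ 2,
        fun t => 2 * (y t - s) * (β * y t + y t * (Γ₁ * (y t) ^ 2 + Γ₂ * (z t) ^ 2))
          + 2 * (z t) * (β * z t + z t * (Γ₃ * (y t) ^ 2 + Γ₁ * (z t) ^ 2)),
        fun t => rfl, ?_, ?_⟩
      · intro t
        have d1 := (((hy' t).sub_const s).pow 2)
        have d2 := ((hz' t).pow 2)
        have := d1.add d2
        refine this.congr_deriv ?_
        push_cast
        ring
      · intro t hle
        have := hkey (y t - s) (z t) hle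
        have heq : 2 * (y t - s) * (β * (s + (y t - s)) + (s + (y t - s)) *
              (Γ₁ * (s + (y t - s)) ^ 2 + Γ₂ * (z t) ^ 2))
            + 2 * (z t) * (β * (z t) + (z t) * (Γ₃ * (s + (y t - s)) ^ 2 + Γ₁ * (z t) ^ 2))
            = 2 * (y t - s) * (β * y t + y t * (Γ₁ * (y t) ^ 2 + Γ₂ * (z t) ^ 2))
              + 2 * (z t) * (β * z t + z t * (Γ₃ * (y t) ^ 2 + Γ₁ * (z t) ^ 2)) := by
          ring
        rw [heq] at this
        exact this
    constructor
    · -- stability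
      intro ε hε
      set B : ℝ := min (r ^ 2) (ε ^ 2) with hB
      have hBpos : 0 < B := lt_min (by positivity) (by positivity)
      refine ⟨Real.sqrt (B / 2), Real.sqrt_pos.mpr (by linarith), ?_⟩
      intro p hp hp0 t ht
      obtain ⟨g, g', hgdef, hgder, hgle⟩ := main p hp
      have hd2 : Real.sqrt (B / 2) ^ 2 = B / 2 := Real.sq_sqrt (by linarith)
      have hg0 : g 0 < B := by
        rw [hgdef 0]
        have h := (norm_sq_prod (p 0 - (s, 0))).2
        have hn : ‖p 0 - (s, 0)‖ ^ 2 < B / 2 := by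
          rw [← hd2]
          exact pow_lt_pow_left₀ hp0 (norm_nonneg _) (by norm_num)
        simp only [Prod.fst_sub, Prod.snd_sub] at h
        norm_num at h
        linarith
      have hbar := barrier' hgder hg0 (fun u hu hgu => by
        have hL : g' u ≤ -c * g u := hgle u (by rw [hgu]; exact min_le_left _ _)
        rw [hgu] at hL
        nlinarith)
      have hgt := hbar t ht
      have hfinal : ‖p t - (s, 0)‖ ^ 2 < ε ^ 2 := by
        have h := (norm_sq_prod (p t - (s, 0))).1
        simp only [Prod.fst_sub, Prod.snd_sub] at h
        norm_num at h
        have := hgdef t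
        have hBe : B ≤ ε ^ 2 := min_le_right _ _
        linarith
      nlinarith [norm_nonneg (p t - (s, 0))]
    · -- attractivity
      refine ⟨Real.sqrt (r ^ 2 / 2), Real.sqrt_pos.mpr (by positivity), ?_⟩
      intro p hp hp0
      obtain ⟨g, g', hgdef, hgder, hgle⟩ := main p hp
      have hd2 : Real.sqrt (r ^ 2 / 2) ^ 2 = r ^ 2 / 2 := Real.sq_sqrt (by positivity)
      have hg0 : g 0 < r ^ 2 := by
        rw [hgdef 0]
        have h := (norm_sq_prod (p 0 - (s, 0))).2
        have hn : ‖p 0 - (s, 0)‖ ^ 2 < r ^ 2 / 2 := by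
          rw [← hd2]
          exact pow_lt_pow_left₀ hp0 (norm_nonneg _) (by norm_num)
        simp only [Prod.fst_sub, Prod.snd_sub] at h
        norm_num at h
        linarith
      have hbar := barrier' hgder hg0 (fun u hu hgu => by
        have hL : g' u ≤ -c * g u := hgle u (le_of_eq hgu)
        rw [hgu] at hL
        nlinarith [mul_pos hc (pow_pos hr 2)])
      have hdec := decay' hgder (fun u hu => hgle u (le_of_lt (hbar u hu)))
      have hgnn : ∀ u, 0 ≤ g u := by
        intro u; rw [hgdef u]; positivity
      -- g tends to 0
      have hexp : Tendsto (fun u : ℝ => g 0 * Real.exp (-c * u)) atTop (𝓝 0) := by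
        have h1 : Tendsto (fun u : ℝ => c * u) atTop atTop :=
          Filter.Tendsto.const_mul_atTop hc Filter.tendsto_id
        have h2 : Tendsto (fun u : ℝ => Real.exp (-(c * u))) atTop (𝓝 0) :=
          Real.tendsto_exp_neg_atTop_nhds_zero.comp h1
        have h3 : Tendsto (fun u : ℝ => g 0 * Real.exp (-(c * u))) atTop (𝓝 (g 0 * 0)) :=
          h2.const_mul (g 0)
        simpa [neg_mul] using h3
      have hgto : Tendsto g atTop (𝓝 0) := by
        refine squeeze_zero' (Eventually.of_forall hgnn) ?_ hexp
        filter_upwards [eventually_ge_atTop (0:ℝ)] with u hu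
        exact hdec u hu
      -- norm tends to 0
      have hnle : ∀ u, ‖p u - (s, 0)‖ ≤ Real.sqrt (g u) := by
        intro u
        rw [show g u = ((p u).1 - s) ^ 2 + ((p u).2) ^ 2 from hgdef u]
        rw [Real.le_sqrt (norm_nonneg _) (by positivity)]
        have h := (norm_sq_prod (p u - (s, 0))).1
        simp only [Prod.fst_sub, Prod.snd_sub] at h
        norm_num at h
        linarith
      have hsq : Tendsto (fun u => Real.sqrt (g u)) atTop (𝓝 0) := by
        have := (Real.continuous_sqrt.tendsto 0).comp hgto
        simpa [Function.comp_def] using this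
      rw [tendsto_iff_norm_sub_tendsto_zero]
      exact squeeze_zero' (Eventually.of_forall (fun u => norm_nonneg _))
        (Eventually.of_forall hnle) hsq
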